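/- Let a₁, a₂ ∈ ℝ, 0 < α₁ < α₂, and let κ₁, κ₂ ∈ ℝ be arbitrary. Let σ ∈ (α₁/α₂, 1), δ ∈ (0,1), D > max(1, (α₂ + 2|a₂|)(1−σ)) and C₃ > 0. Define φ₃(x,y) = C₃((Dx² + y²)/|y|^{2σ})^δ on U₃ = {(x,y) : x < −1/2 and |y| > 1}. Then φ₃ is a Lyapunov function for L on U₃. -/

import Mathlib

noncomputable def Lop (a₁ a₂ α₁ α₂ κ₁ κ₂ : ℝ) (Φ : ℝ × ℝ → ℝ) (p : ℝ × ℝ) : ℝ :=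
  (a₁ * p.1 - α₁ * p.1 ^ 2 + p.2 ^ 2) * deriv (fun t => Φ (t, p.2)) p.1
    + (a₂ * p.2 - α₂ * p.1 * p.2) * deriv (fun t => Φ (p.1, t)) p.2
    + κ₁ * deriv (deriv (fun t => Φ (t, p.2))) p.1
    + κ₂ * deriv (deriv (fun t => Φ (p.1, t))) p.2

/-- `φ` is a Lyapunov function for the operator `L` (with the given parameters) on `U`:
(I) `φ` is `C^∞` on `U`; (II) `φ z → ∞` as `|z| → ∞`, `z ∈ U`;
(III) there are `C, D > 0` with `Lφ ≤ -C•φ + D` on `U`. -/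
def IsLyapunovOn (a₁ a₂ α₁ α₂ κ₁ κ₂ : ℝ) (φ : ℝ × ℝ → ℝ) (U : Set (ℝ × ℝ)) : Prop :=
  ContDiffOn ℝ (⊤ : ℕ∞) φ U ∧
    (∀ M : ℝ, ∃ R : ℝ, ∀ z ∈ U, R < ‖z‖ → M < φ z) ∧
    (∃ C > (0:ℝ), ∃ D > (0:ℝ), ∀ z ∈ U, Lop a₁ a₂ α₁ α₂ κ₁ κ₂ φ z ≤ -C * φ z + D)
noncomputable def phi3 (C₃ Dc σ δ : ℝ) (p : ℝ × ℝ) : ℝ :=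
  C₃ * ((Dc * p.1 ^ 2 + p.2 ^ 2) / |p.2| ^ (2 * σ)) ^ δ

def U3 : Set (ℝ × ℝ) := {p : ℝ × ℝ | p.1 < -1/2 ∧ 1 < |p.2|}

open Real
namespace St4

noncomputable def F (C₃ Dc σ δ x y : ℝ) : ℝ :=
  C₃ * (Dc * x ^ 2 + y ^ 2) ^ δ * (y ^ 2) ^ (-(σ * δ))

lemma abs_rpow_eq (σ y : ℝ) : |y| ^ (2 * σ) = (y ^ 2) ^ σ := by
  rw [Real.rpow_mul (abs_nonneg y), show ((2:ℝ)) = ((2:ℕ):ℝ) by norm_num,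
    Real.rpow_natCast, sq_abs]

lemma phi3_eq {C₃ Dc σ δ : ℝ} (p : ℝ × ℝ) :
    phi3 C₃ Dc σ δ p = C₃ * ((Dc * p.1 ^ 2 + p.2 ^ 2) / (p.2 ^ 2) ^ σ) ^ δ := by
  rw [phi3, abs_rpow_eq]

lemma phi3_eq_F {C₃ Dc σ δ : ℝ} (hDc : 0 ≤ Dc) {y : ℝ} (hy : y ≠ 0) (x : ℝ) :
    phi3 C₃ Dc σ δ (x, y) = F C₃ Dc σ δ x y := by
  have hy2 : (0:ℝ) < y ^ 2 := by positivity
  rw [phi3_eq, F]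
  have hnum : (0:ℝ) ≤ Dc * x ^ 2 + y ^ 2 := by positivity
  rw [Real.div_rpow hnum (Real.rpow_nonneg hy2.le σ), ← Real.rpow_mul hy2.le,
    Real.rpow_neg hy2.le, div_eq_mul_inv, mul_assoc]

end St4
open Real
namespace St4

section derivs
variable {C₃ Dc σ δ : ℝ} {x y : ℝ}

lemma hasDerivAt_sq_add (c t : ℝ) : HasDerivAt (fun s : ℝ => c + s ^ 2) (2 * t) t := by
  simpa using (hasDerivAt_pow 2 t).const_add c

lemma hasDerivAt_F_x (hDc : 0 < Dc) (hy : y ≠ 0) (x : ℝ) :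
    HasDerivAt (fun t => F C₃ Dc σ δ t y)
      (C₃ * (Dc * (2 * x) * δ * (Dc * x ^ 2 + y ^ 2) ^ (δ - 1)) * (y ^ 2) ^ (-(σ * δ))) x := by
  have hu : Dc * x ^ 2 + y ^ 2 ≠ 0 := by positivity
  have h1 : HasDerivAt (fun t : ℝ => Dc * t ^ 2 + y ^ 2) (Dc * (2 * x)) x := by
    simpa [mul_assoc] using ((hasDerivAt_pow 2 x).const_mul Dc).add_const (y ^ 2)
  exact ((h1.rpow_const (Or.inl hu)).const_mul C₃).mul_const _

lemma deriv2_F_x (hDc : 0 < Dc) (hy : y ≠ 0) (x : ℝ) :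
    deriv (deriv (fun t => F C₃ Dc σ δ t y)) x
      = C₃ * (y ^ 2) ^ (-(σ * δ)) * (2 * Dc * δ) *
        ((Dc * x ^ 2 + y ^ 2) ^ (δ - 1)
          + (δ - 1) * (Dc * x ^ 2 + y ^ 2) ^ (δ - 2) * (2 * Dc * x ^ 2)) := by
  have hd : deriv (fun t => F C₃ Dc σ δ t y)
      = fun x => (C₃ * Dc * 2 * δ * (y ^ 2) ^ (-(σ * δ))) *
          (x * (Dc * x ^ 2 + y ^ 2) ^ (δ - 1)) := by
    funext x
    rw [(hasDerivAt_F_x hDc hy x).deriv]; ring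
  rw [hd]
  have hu : Dc * x ^ 2 + y ^ 2 ≠ 0 := by positivity
  have h1 : HasDerivAt (fun t : ℝ => Dc * t ^ 2 + y ^ 2) (Dc * (2 * x)) x := by
    simpa [mul_assoc] using ((hasDerivAt_pow 2 x).const_mul Dc).add_const (y ^ 2)
  have h2 : HasDerivAt (fun x : ℝ => x * (Dc * x ^ 2 + y ^ 2) ^ (δ - 1))
      (1 * (Dc * x ^ 2 + y ^ 2) ^ (δ - 1)
        + x * (Dc * (2 * x) * (δ - 1) * (Dc * x ^ 2 + y ^ 2) ^ (δ - 1 - 1))) x :=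
    (hasDerivAt_id x).mul (h1.rpow_const (Or.inl hu))
  rw [show δ - 1 - 1 = δ - 2 by ring] at h2
  rw [(h2.const_mul _).deriv]; ring

end derivs
end St4
open Real
namespace St4
section derivs2
variable {C₃ Dc σ δ : ℝ} {x y : ℝ}

noncomputable def Gv (C₃ Dc σ δ x t : ℝ) : ℝ :=
  C₃ * ((2 * t) * δ * (Dc * x ^ 2 + t ^ 2) ^ (δ - 1) * (t ^ 2) ^ (-(σ * δ))
    + (Dc * x ^ 2 + t ^ 2) ^ δ * ((2 * t) * (-(σ * δ)) * (t ^ 2) ^ (-(σ * δ) - 1)))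

lemma hasDerivAt_F_y (hDc : 0 < Dc) {t : ℝ} (ht : t ≠ 0) (x : ℝ) :
    HasDerivAt (fun s => F C₃ Dc σ δ x s) (Gv C₃ Dc σ δ x t) t := by
  have hu : Dc * x ^ 2 + t ^ 2 ≠ 0 := by positivity
  have ht2 : t ^ 2 ≠ 0 := by positivity
  have h1 : HasDerivAt (fun s : ℝ => Dc * x ^ 2 + s ^ 2) (2 * t) t := hasDerivAt_sq_add _ t
  have h3 : HasDerivAt (fun s : ℝ => s ^ 2) (2 * t) t := by simpa using hasDerivAt_pow 2 t
  have h5 := ((h1.rpow_const (p := δ) (Or.inl hu)).mul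
    (h3.rpow_const (p := -(σ * δ)) (Or.inl ht2))).const_mul C₃
  have hF : (fun s => F C₃ Dc σ δ x s)
      = fun s => C₃ * ((Dc * x ^ 2 + s ^ 2) ^ δ * (s ^ 2) ^ (-(σ * δ))) := by
    funext s; rw [F]; ring
  rw [hF, Gv]
  convert h5 using 1
  all_goals rfl

lemma deriv2_F_y (hDc : 0 < Dc) (hy : y ≠ 0) (x : ℝ) :
    deriv (deriv (fun s => F C₃ Dc σ δ x s)) y
      = C₃ * (2 * δ * ((Dc * x ^ 2 + y ^ 2) ^ (δ - 1) * (y ^ 2) ^ (-(σ * δ))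
            + 2 * (δ - 1) * y ^ 2 * (Dc * x ^ 2 + y ^ 2) ^ (δ - 2) * (y ^ 2) ^ (-(σ * δ))
            - 2 * (σ * δ) * y ^ 2 * (Dc * x ^ 2 + y ^ 2) ^ (δ - 1) * (y ^ 2) ^ (-(σ * δ) - 1))
        - 2 * (σ * δ) * (2 * δ * y ^ 2 * (Dc * x ^ 2 + y ^ 2) ^ (δ - 1) * (y ^ 2) ^ (-(σ * δ) - 1)
            + (Dc * x ^ 2 + y ^ 2) ^ δ * (y ^ 2) ^ (-(σ * δ) - 1)
            - 2 * (σ * δ + 1) * y ^ 2 * (Dc * x ^ 2 + y ^ 2) ^ δ * (y ^ 2) ^ (-(σ * δ) - 2))) := by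
  have hder : deriv (fun s => F C₃ Dc σ δ x s) =ᶠ[nhds y] Gv C₃ Dc σ δ x :=
    (eventually_ne_nhds hy).mono fun t ht => (hasDerivAt_F_y hDc ht x).deriv
  rw [hder.deriv_eq]
  have hu : Dc * x ^ 2 + y ^ 2 ≠ 0 := by positivity
  have hy2 : y ^ 2 ≠ 0 := by positivity
  have h1 : HasDerivAt (fun s : ℝ => Dc * x ^ 2 + s ^ 2) (2 * y) y := hasDerivAt_sq_add _ y
  have h3 : HasDerivAt (fun s : ℝ => s ^ 2) (2 * y) y := by simpa using hasDerivAt_pow 2 y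
  have hA : HasDerivAt (fun s : ℝ => (2 * s) * δ) (2 * δ) y := by
    simpa using ((hasDerivAt_id y).const_mul 2).mul_const δ
  have hB := h1.rpow_const (p := δ - 1) (Or.inl hu)
  have hC := h3.rpow_const (p := -(σ * δ)) (Or.inl hy2)
  have hC1 := h3.rpow_const (p := -(σ * δ) - 1) (Or.inl hy2)
  have hD := h1.rpow_const (p := δ) (Or.inl hu)
  have hE : HasDerivAt (fun s : ℝ => (2 * s) * (-(σ * δ))) (2 * (-(σ * δ))) y := by
    simpa using ((hasDerivAt_id y).const_mul 2).mul_const (-(σ * δ))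
  have hS1 := (hA.mul hB).mul hC
  have hS2 := hD.mul (hE.mul hC1)
  have hG := ((hS1.add hS2).const_mul C₃)
  have hGv : (Gv C₃ Dc σ δ x)
      = fun s => C₃ * ((2 * s) * δ * (Dc * x ^ 2 + s ^ 2) ^ (δ - 1) * (s ^ 2) ^ (-(σ * δ))
        + (Dc * x ^ 2 + s ^ 2) ^ δ * ((2 * s) * (-(σ * δ)) * (s ^ 2) ^ (-(σ * δ) - 1))) := rfl
  rw [hGv, (show HasDerivAt (fun s : ℝ => C₃ * ((2 * s) * δ * (Dc * x ^ 2 + s ^ 2) ^ (δ - 1) * (s ^ 2) ^ (-(σ * δ))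
        + (Dc * x ^ 2 + s ^ 2) ^ δ * ((2 * s) * (-(σ * δ)) * (s ^ 2) ^ (-(σ * δ) - 1)))) _ y from hG).deriv]
  rw [show δ - 1 - 1 = δ - 2 by ring, show -(σ * δ) - 1 - 1 = -(σ * δ) - 2 by ring]
  simp only [Pi.mul_apply]
  ring

end derivs2
end St4
open Real
namespace St4

set_option maxHeartbeats 1000000 in
lemma key {a₁ a₂ α₁ α₂ κ₁ κ₂ σ δ Dc C₃ x y u v r1 r2 ε β K M₂ M₃ R' : ℝ}
    (hσ₀ : 0 < σ) (hσ₂ : σ < 1) (hδ₁ : 0 < δ) (hδ₂ : δ < 1) (hC₃ : 0 < C₃)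
    (hDc1 : 1 < Dc)
    (hx : x < -(1/2)) (hv1 : 1 < v) (hvy : v = y ^ 2) (huv : u = Dc * x ^ 2 + v)
    (hr1 : 0 < r1) (hr2 : 0 < r2) (hr1u : r1 * u ≤ 1) (hr2v : r2 * v ≤ 1)
    (hε : 0 < ε) (hε2 : ε ≤ Dc - (α₂ + 2 * |a₂|) * (1 - σ))
    (hβ : 0 < β) (hβ2 : β ≤ Dc * (σ * α₂ - α₁))
    (hK : 3 * Dc * |κ₁| + 12 * |κ₂| ≤ K)
    (hM₂ : Dc * (|a₁| + |a₂|) + K * Dc + ε * Dc / 4 ≤ M₂)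
    (hM₃ : 0 ≤ M₃) (hM₃2 : M₂ ^ 3 ≤ M₃ * β ^ 2)
    (hR' : (M₃ + K) ^ 2 ≤ R' * ε) :
    (a₁ * x - α₁ * x ^ 2 + y ^ 2) * (C₃ * (Dc * (2 * x) * δ * (r1 * u)) * (r2 * v * v))
      + (a₂ * y - α₂ * x * y) *
        (C₃ * ((2 * y) * δ * (r1 * u) * (r2 * v * v)
          + (r1 * (u * u)) * ((2 * y) * (-(σ * δ)) * (r2 * v))))
      + κ₁ * (C₃ * (r2 * v * v) * (2 * Dc * δ) * ((r1 * u) + (δ - 1) * r1 * (2 * Dc * x ^ 2)))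
      + κ₂ * (C₃ * (2 * δ * ((r1 * u) * (r2 * v * v) + 2 * (δ - 1) * v * r1 * (r2 * v * v)
              - 2 * (σ * δ) * v * (r1 * u) * (r2 * v))
            - 2 * (σ * δ) * (2 * δ * v * (r1 * u) * (r2 * v) + (r1 * (u * u)) * (r2 * v)
              - 2 * (σ * δ + 1) * v * (r1 * (u * u)) * r2)))
      ≤ -(δ * ε / 2) * (C₃ * (r1 * (u * u)) * (r2 * v * v)) + (2 * C₃ * δ * R' + 1) := by
  have hDc0 : (0:ℝ) < Dc := by linarith
  have hv0 : (0:ℝ) < v := by linarith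
  have hx2 : (1:ℝ)/4 ≤ x ^ 2 := by
    linarith only [mul_pos (show (0:ℝ) < -x - 1/2 by linarith only [hx]) (show (0:ℝ) < -x + 1/2 by linarith only [hx])]
  have hDx2' : (0:ℝ) ≤ Dc * x ^ 2 := by positivity
  have hvu : v ≤ u := by rw [huv]; linarith
  have hu1 : (1:ℝ) ≤ u := by linarith
  have hu0 : (0:ℝ) < u := by linarith
  have hDx2 : Dc * x ^ 2 ≤ u := by rw [huv]; linarith
  have hK0 : (0:ℝ) ≤ K := le_trans (by positivity) hK
  have hR0 : (0:ℝ) ≤ R' :=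
    (mul_le_mul_iff_of_pos_right hε).mp (by linarith only [sq_nonneg (M₃ + K), hR'])
  have hM₂0 : (0:ℝ) < M₂ := by
    linarith only [hM₂, mul_nonneg hDc0.le (add_nonneg (abs_nonneg a₁) (abs_nonneg a₂)),
      mul_nonneg hK0 hDc0.le, mul_pos hε hDc0]
  obtain ⟨B, hBdef⟩ : ∃ B : ℝ,
      B = Dc * x * (a₁ * x - α₁ * x ^ 2 + v) + (a₂ - α₂ * x) * (v - σ * u) := ⟨_, rfl⟩
  obtain ⟨A₁, hA₁def⟩ : ∃ A₁ : ℝ, A₁ = Dc * v * (u + 2 * (δ - 1) * (Dc * x ^ 2)) := ⟨_, rfl⟩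
  obtain ⟨A₂, hA₂def⟩ : ∃ A₂ : ℝ, A₂ = u * v + 2 * (δ - 1) * v ^ 2 - 4 * (σ * δ) * (u * v)
      + σ * (2 * σ * δ + 1) * u ^ 2 := ⟨_, rfl⟩
  obtain ⟨P, hPdef⟩ : ∃ P : ℝ, P = 2 * C₃ * δ * (r1 * (r2 * v)) := ⟨_, rfl⟩
  have hP : 0 < P := by rw [hPdef]; positivity
  -- Step 1 : identity
  have hid : (a₁ * x - α₁ * x ^ 2 + y ^ 2) * (C₃ * (Dc * (2 * x) * δ * (r1 * u)) * (r2 * v * v))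
      + (a₂ * y - α₂ * x * y) *
        (C₃ * ((2 * y) * δ * (r1 * u) * (r2 * v * v)
          + (r1 * (u * u)) * ((2 * y) * (-(σ * δ)) * (r2 * v))))
      + κ₁ * (C₃ * (r2 * v * v) * (2 * Dc * δ) * ((r1 * u) + (δ - 1) * r1 * (2 * Dc * x ^ 2)))
      + κ₂ * (C₃ * (2 * δ * ((r1 * u) * (r2 * v * v) + 2 * (δ - 1) * v * r1 * (r2 * v * v)
              - 2 * (σ * δ) * v * (r1 * u) * (r2 * v))
            - 2 * (σ * δ) * (2 * δ * v * (r1 * u) * (r2 * v) + (r1 * (u * u)) * (r2 * v)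
              - 2 * (σ * δ + 1) * v * (r1 * (u * u)) * r2)))
      = P * (u * v * B + κ₁ * A₁ + κ₂ * A₂) := by
    rw [hPdef, hBdef, hA₁def, hA₂def]; subst hvy; ring
  rw [hid]; clear hid
  -- Step 2 : kappa bounds
  have p1 : u * v ≤ u ^ 2 := by linarith only [mul_le_mul_of_nonneg_left hvu hu0.le]
  have p5 : (0:ℝ) ≤ u * v := by positivity
  have p7 : v ^ 2 ≤ u ^ 2 := by
    linarith only [mul_le_mul hvu hvu hv0.le hu0.le]
  have hσ2 : σ ^ 2 ≤ 1 := by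
    linarith only [mul_lt_mul_of_pos_left hσ₂ hσ₀, hσ₀, hσ₂]
  have hσδ : σ * δ ≤ 1 := mul_le_one₀ hσ₂.le hδ₁.le hδ₂.le
  have hA1ub : A₁ ≤ 3 * Dc * u ^ 2 := by
    have q2 : 2 * (δ - 1) * (Dc ^ 2 * (x ^ 2 * v)) ≤ 0 := by
      have h0 : (0:ℝ) ≤ Dc ^ 2 * (x ^ 2 * v) := by positivity
      linarith only [mul_le_mul_of_nonneg_right (show 2 * (δ - 1) ≤ (0:ℝ) by linarith only [hδ₂]) h0]
    have q1 : Dc * (v * u) ≤ Dc * u ^ 2 :=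
      mul_le_mul_of_nonneg_left (by linarith only [mul_le_mul_of_nonneg_right hvu hu0.le]) hDc0.le
    rw [hA₁def]
    linarith only [q1, q2, mul_nonneg hDc0.le (sq_nonneg u)]
  have hA1lb : -(3 * Dc * u ^ 2) ≤ A₁ := by
    have q3 : Dc * (Dc * x ^ 2 * v) ≤ Dc * (u * u) :=
      mul_le_mul_of_nonneg_left (mul_le_mul hDx2 hvu hv0.le hu0.le) hDc0.le
    have q4 : 0 ≤ Dc * (v * u) := by positivity
    have q5 : (-2:ℝ) * (Dc ^ 2 * (x ^ 2 * v)) ≤ 2 * (δ - 1) * (Dc ^ 2 * (x ^ 2 * v)) :=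
      mul_le_mul_of_nonneg_right (by linarith only [hδ₁]) (by positivity)
    rw [hA₁def]
    linarith only [q3, q4, q5, mul_nonneg hDc0.le (sq_nonneg u)]
  have hA2ub : A₂ ≤ 12 * u ^ 2 := by
    have p2 : 2 * (δ - 1) * v ^ 2 ≤ 0 := by
      linarith only [mul_le_mul_of_nonneg_right (show 2 * (δ - 1) ≤ (0:ℝ) by linarith only [hδ₂]) (sq_nonneg v)]
    have p3 : (0:ℝ) ≤ 4 * (σ * δ) * (u * v) := by positivity
    have p4 : σ * (2 * σ * δ + 1) * u ^ 2 ≤ 3 * u ^ 2 := by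
      refine mul_le_mul_of_nonneg_right ?_ (sq_nonneg u)
      have : σ ^ 2 * δ ≤ 1 := mul_le_one₀ hσ2 hδ₁.le hδ₂.le
      linarith only [this, hσ₀, hσ₂]
    rw [hA₂def]
    linarith only [p1, p2, p3, p4, sq_nonneg u]
  have hA2lb : -(12 * u ^ 2) ≤ A₂ := by
    have p6 : -(2 * u ^ 2) ≤ 2 * (δ - 1) * v ^ 2 := by
      linarith only [mul_le_mul_of_nonneg_right (show (-2:ℝ) ≤ 2 * (δ - 1) by linarith only [hδ₁])
        (sq_nonneg v), p7]
    have p8 : 4 * (σ * δ) * (u * v) ≤ 4 * u ^ 2 := by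
      linarith only [mul_le_mul_of_nonneg_right hσδ p5, p1]
    have p9 : 0 ≤ σ * (2 * σ * δ + 1) * u ^ 2 := by positivity
    rw [hA₂def]
    linarith only [p5, p6, p8, p9, sq_nonneg u]
  have habs1 : κ₁ * A₁ ≤ 3 * Dc * |κ₁| * u ^ 2 := by
    calc κ₁ * A₁ ≤ |κ₁ * A₁| := le_abs_self _
      _ = |κ₁| * |A₁| := abs_mul _ _
      _ ≤ |κ₁| * (3 * Dc * u ^ 2) :=
        mul_le_mul_of_nonneg_left (abs_le.mpr ⟨hA1lb, hA1ub⟩) (abs_nonneg κ₁)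
      _ = 3 * Dc * |κ₁| * u ^ 2 := by ring
  have habs2 : κ₂ * A₂ ≤ 12 * |κ₂| * u ^ 2 := by
    calc κ₂ * A₂ ≤ |κ₂ * A₂| := le_abs_self _
      _ = |κ₂| * |A₂| := abs_mul _ _
      _ ≤ |κ₂| * (12 * u ^ 2) :=
        mul_le_mul_of_nonneg_left (abs_le.mpr ⟨hA2lb, hA2ub⟩) (abs_nonneg κ₂)
      _ = 12 * |κ₂| * u ^ 2 := by ring
  have hκ : κ₁ * A₁ + κ₂ * A₂ ≤ K * u ^ 2 := by
    linarith only [habs1, habs2, mul_le_mul_of_nonneg_right hK (sq_nonneg u)]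
  -- Step 3 : bound on B
  have hB : B ≤ β * x ^ 3 + Dc * (|a₁| + |a₂|) * x ^ 2 - ε / 2 * v := by
    have hBexp : B = Dc * (σ * α₂ - α₁) * x ^ 3 + Dc * (a₁ - σ * a₂) * x ^ 2
        + (Dc - (1 - σ) * α₂) * (x * v) + (1 - σ) * a₂ * v := by
      rw [hBdef, huv]; ring
    have hx3 : x ^ 3 < 0 := Odd.pow_neg ⟨1, by norm_num⟩ (by linarith)
    have e1 : Dc * (σ * α₂ - α₁) * x ^ 3 ≤ β * x ^ 3 :=
      mul_le_mul_of_nonpos_right hβ2 hx3.le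
    have ha1 : a₁ - σ * a₂ ≤ |a₁| + |a₂| := by
      linarith only [le_abs_self a₁, mul_le_mul_of_nonneg_left (neg_le_abs a₂) hσ₀.le,
        mul_le_mul_of_nonneg_right hσ₂.le (abs_nonneg a₂)]
    have e2 : Dc * (a₁ - σ * a₂) * x ^ 2 ≤ Dc * (|a₁| + |a₂|) * x ^ 2 :=
      mul_le_mul_of_nonneg_right (mul_le_mul_of_nonneg_left ha1 hDc0.le) (sq_nonneg x)
    have hw : 0 < Dc - (1 - σ) * α₂ := by
      linarith only [hε, hε2, mul_nonneg (abs_nonneg a₂) (show (0:ℝ) ≤ 1 - σ by linarith only [hσ₂])]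
    have e3 : (Dc - (1 - σ) * α₂) * (x * v) + (1 - σ) * a₂ * v ≤ -(ε / 2) * v := by
      have hxv : x * v ≤ -(1/2) * v := mul_le_mul_of_nonneg_right hx.le hv0.le
      have e3a : (Dc - (1 - σ) * α₂) * (x * v) ≤ (Dc - (1 - σ) * α₂) * (-(1/2) * v) :=
        mul_le_mul_of_nonneg_left hxv hw.le
      have e3b : (1 - σ) * a₂ * v ≤ (1 - σ) * |a₂| * v :=
        mul_le_mul_of_nonneg_right
          (mul_le_mul_of_nonneg_left (le_abs_self a₂) (by linarith)) hv0.le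
      linarith only [e3a, e3b, mul_le_mul_of_nonneg_right hε2 hv0.le]
    rw [hBexp]; linarith only [e1, e2, e3]
  -- Step 4 : cubic sup bound
  have hcube : β * x ^ 3 + M₂ * x ^ 2 ≤ M₃ := by
    rcases le_or_gt (M₂ + β * x) 0 with h | h
    · linarith only [mul_nonpos_of_nonneg_of_nonpos (sq_nonneg x) h, hM₃]
    · have hbx : β * x < 0 := mul_neg_of_pos_of_neg hβ (by linarith)
      have h3c : (β * x) ^ 3 < 0 := Odd.pow_neg ⟨1, by norm_num⟩ hbx
      have key2 : (β * x) ^ 2 * (M₂ + β * x) ≤ M₂ ^ 3 := by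
        linarith only [mul_pos (mul_pos hM₂0 h) (show (0:ℝ) < M₂ - β * x by linarith only [hM₂0, hbx]), h3c]
      have h9 : β ^ 2 * (β * x ^ 3 + M₂ * x ^ 2) ≤ β ^ 2 * M₃ := by
        linarith only [key2, hM₃2]
      exact (mul_le_mul_iff_of_pos_left (by positivity : (0:ℝ) < β ^ 2)).mp h9
  -- Step 5 : main scalar bound
  have hS : v * B + K * u + ε / 4 * (u * v) ≤ R' := by
    have h1 : v * B ≤ v * (β * x ^ 3 + Dc * (|a₁| + |a₂|) * x ^ 2 - ε / 2 * v) :=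
      mul_le_mul_of_nonneg_left hB hv0.le
    have h2 : K * (Dc * x ^ 2) ≤ K * (Dc * x ^ 2) * v :=
      le_mul_of_one_le_right (mul_nonneg hK0 hDx2') hv1.le
    have h3 : v * (β * x ^ 3 + M₂ * x ^ 2) ≤ v * M₃ :=
      mul_le_mul_of_nonneg_left hcube hv0.le
    have h4 : v * M₃ + K * v - ε / 4 * v ^ 2 ≤ R' := by
      have h10 : ε * (M₃ * v + K * v - ε / 4 * v ^ 2) ≤ ε * R' := by
        linarith only [sq_nonneg ((M₃ + K) - ε * v / 2), hR']
      have := (mul_le_mul_iff_of_pos_left hε).mp h10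
      linarith only [this]
    have h5 : (Dc * (|a₁| + |a₂|) + K * Dc + ε * Dc / 4) * (x ^ 2 * v)
        ≤ M₂ * (x ^ 2 * v) := mul_le_mul_of_nonneg_right hM₂ (by positivity)
    have h6 : v * B + K * u + ε / 4 * (u * v)
        = v * B + K * (Dc * x ^ 2) + K * v + ε / 4 * Dc * (x ^ 2 * v) + ε / 4 * v ^ 2 := by
      rw [huv]; ring
    rw [h6]; linarith only [h1, h2, h3, h4, h5]
  -- Step 6 : assemble
  have h7 : u * v * B + κ₁ * A₁ + κ₂ * A₂ + ε / 4 * (u ^ 2 * v) ≤ u * R' := by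
    have h8 : u * (v * B + K * u + ε / 4 * (u * v)) ≤ u * R' :=
      mul_le_mul_of_nonneg_left hS hu0.le
    linarith only [h8, hκ]
  have hPu : P * (u * R') ≤ 2 * C₃ * δ * R' := by
    have hle1 : (r1 * u) * (r2 * v) ≤ 1 :=
      mul_le_one₀ hr1u (by positivity) hr2v
    have hP2 : P * (u * R') = (2 * C₃ * δ * R') * ((r1 * u) * (r2 * v)) := by
      rw [hPdef]; ring
    rw [hP2]
    calc (2 * C₃ * δ * R') * ((r1 * u) * (r2 * v)) ≤ (2 * C₃ * δ * R') * 1 :=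
          mul_le_mul_of_nonneg_left hle1 (by positivity)
      _ = 2 * C₃ * δ * R' := by ring
  have heq : -(δ * ε / 2) * (C₃ * (r1 * (u * u)) * (r2 * v * v))
      = -(P * (ε / 4 * (u ^ 2 * v))) := by rw [hPdef]; ring
  have hfin : P * (u * v * B + κ₁ * A₁ + κ₂ * A₂) + P * (ε / 4 * (u ^ 2 * v))
      ≤ 2 * C₃ * δ * R' + 1 := by
    calc P * (u * v * B + κ₁ * A₁ + κ₂ * A₂) + P * (ε / 4 * (u ^ 2 * v))
        = P * (u * v * B + κ₁ * A₁ + κ₂ * A₂ + ε / 4 * (u ^ 2 * v)) := by ring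
      _ ≤ P * (u * R') := mul_le_mul_of_nonneg_left h7 hP.le
      _ ≤ 2 * C₃ * δ * R' := hPu
      _ ≤ 2 * C₃ * δ * R' + 1 := by linarith
  linarith only [heq, hfin]

end St4
open Real
namespace St4

lemma phi3_eq_F_all {C₃ Dc σ δ : ℝ} (hDc : 0 ≤ Dc) (hσ : 0 < σ) (hδ : 0 < δ) (x y : ℝ) :
    phi3 C₃ Dc σ δ (x, y) = F C₃ Dc σ δ x y := by
  rcases eq_or_ne y 0 with rfl | hy
  · rw [phi3_eq, F]
    norm_num [Real.zero_rpow hσ.ne', Real.zero_rpow hδ.ne',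
      Real.zero_rpow (show -(σ * δ) ≠ 0 from neg_ne_zero.mpr (mul_pos hσ hδ).ne')]
  · exact phi3_eq_F hDc hy x

end St4
namespace St4
lemma rpow_shift1 {x : ℝ} (hx : x ≠ 0) (p : ℝ) : x ^ p = x ^ (p - 1) * x := by
  conv_lhs => rw [show p = p - 1 + 1 by ring]
  rw [Real.rpow_add_one hx]
end St4

set_option maxHeartbeats 2000000

/-- `φ₃` is a Lyapunov function on `U₃`. -/
theorem statement4 (a₁ a₂ α₁ α₂ κ₁ κ₂ σ δ Dc C₃ : ℝ)
    (hα₁ : 0 < α₁) (hα : α₁ < α₂)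
    (hσ₁ : α₁ / α₂ < σ) (hσ₂ : σ < 1) (hδ₁ : 0 < δ) (hδ₂ : δ < 1)
    (hD : max 1 ((α₂ + 2 * |a₂|) * (1 - σ)) < Dc) (hC₃ : 0 < C₃) :
    IsLyapunovOn a₁ a₂ α₁ α₂ κ₁ κ₂ (phi3 C₃ Dc σ δ) U3 := by
  have hα₂0 : 0 < α₂ := lt_trans hα₁ hα
  have hσ₀ : 0 < σ := lt_trans (div_pos hα₁ hα₂0) hσ₁
  have hDc1 : 1 < Dc := lt_of_le_of_lt (le_max_left _ _) hD
  have hDc0 : 0 < Dc := by linarith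
  refine ⟨?_, ?_, ?_⟩
  · -- Part I : smoothness
    intro z hz
    have hy0 : z.2 ≠ 0 := by
      have := hz.2
      intro h; rw [h] at this; simp at this; linarith
    have hy2 : (0:ℝ) < z.2 ^ 2 := by positivity
    have hrepr : phi3 C₃ Dc σ δ
        = fun p : ℝ × ℝ => C₃ * ((Dc * p.1 ^ 2 + p.2 ^ 2) / (p.2 ^ 2) ^ σ) ^ δ :=
      funext fun p => St4.phi3_eq p
    rw [hrepr]
    apply ContDiffAt.contDiffWithinAt
    have h1 : ContDiffAt ℝ (⊤:ℕ∞) (fun p : ℝ × ℝ => Dc * p.1 ^ 2 + p.2 ^ 2) z :=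
      ((contDiff_const.mul (contDiff_fst.pow 2)).add (contDiff_snd.pow 2)).contDiffAt
    have h2 : ContDiffAt ℝ (⊤:ℕ∞) (fun p : ℝ × ℝ => (p.2 ^ 2) ^ σ) z :=
      ContDiffAt.rpow ((contDiff_snd.pow 2).contDiffAt) contDiffAt_const hy2.ne'
    have hden : ((z.2 ^ 2) ^ σ : ℝ) ≠ 0 := (Real.rpow_pos_of_pos hy2 σ).ne'
    have h3 := h1.div h2 hden
    have hbase : (Dc * z.1 ^ 2 + z.2 ^ 2) / (z.2 ^ 2) ^ σ ≠ 0 := by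
      apply ne_of_gt
      apply div_pos (by positivity) (Real.rpow_pos_of_pos hy2 σ)
    exact contDiffAt_const.mul (ContDiffAt.rpow h3 contDiffAt_const hbase)
  · -- Part II : coercivity
    intro M
    set e := 2 * ((1 - σ) * δ) with hedef
    have he : 0 < e := by
      rw [hedef]; exact mul_pos two_pos (mul_pos (by linarith) hδ₁)
    set N := max 1 (M / C₃ + 1) with hNdef
    have hN1 : (1:ℝ) ≤ N := le_max_left _ _
    have hN0 : (0:ℝ) ≤ N := by linarith
    refine ⟨N ^ (1 / e), ?_⟩
    intro z hz hRz
    have hR0 : (0:ℝ) ≤ N ^ (1 / e) := Real.rpow_nonneg hN0 _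
    have hy0 : z.2 ≠ 0 := by
      have := hz.2
      intro h; rw [h] at this; simp at this; linarith
    have hy2 : (0:ℝ) < z.2 ^ 2 := by positivity
    have hu0 : (0:ℝ) < Dc * z.1 ^ 2 + z.2 ^ 2 := by positivity
    -- ‖z‖² ≤ u
    have hnorm : ‖z‖ = max |z.1| |z.2| := by
      rw [Prod.norm_def, Real.norm_eq_abs, Real.norm_eq_abs]
    have hzsq : ‖z‖ ^ 2 ≤ Dc * z.1 ^ 2 + z.2 ^ 2 := by
      rcases max_choice |z.1| |z.2| with h | h <;> rw [hnorm, h]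
      · rw [sq_abs]; nlinarith [sq_nonneg z.2, sq_nonneg z.1]
      · rw [sq_abs]; nlinarith [sq_nonneg z.1]
    -- φ z ≥ C₃ * ‖z‖ ^ e
    have hvu : z.2 ^ 2 ≤ Dc * z.1 ^ 2 + z.2 ^ 2 := by nlinarith [sq_nonneg z.1]
    have hg1 : ((Dc * z.1 ^ 2 + z.2 ^ 2) : ℝ) ^ (1 - σ)
        ≤ (Dc * z.1 ^ 2 + z.2 ^ 2) / (z.2 ^ 2) ^ σ := by
      have hmono : ((z.2 ^ 2) : ℝ) ^ σ ≤ (Dc * z.1 ^ 2 + z.2 ^ 2) ^ σ :=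
        Real.rpow_le_rpow hy2.le hvu hσ₀.le
      have hEq : ((Dc * z.1 ^ 2 + z.2 ^ 2) : ℝ) ^ (1 - σ)
          = (Dc * z.1 ^ 2 + z.2 ^ 2) / (Dc * z.1 ^ 2 + z.2 ^ 2) ^ σ := by
        rw [Real.rpow_sub hu0, Real.rpow_one]
      rw [hEq]
      exact div_le_div_of_nonneg_left hu0.le (Real.rpow_pos_of_pos hy2 σ) hmono
    have hstep : C₃ * ‖z‖ ^ e ≤ phi3 C₃ Dc σ δ z := by
      have hφ : phi3 C₃ Dc σ δ z
          = C₃ * ((Dc * z.1 ^ 2 + z.2 ^ 2) / (z.2 ^ 2) ^ σ) ^ δ := St4.phi3_eq z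
      rw [hφ]
      have c1 : (‖z‖ ^ 2 : ℝ) ^ ((1 - σ) * δ) ≤ ((Dc * z.1 ^ 2 + z.2 ^ 2) : ℝ) ^ ((1 - σ) * δ) :=
        Real.rpow_le_rpow (by positivity) hzsq (mul_nonneg (by linarith) hδ₁.le)
      have c2 : ((Dc * z.1 ^ 2 + z.2 ^ 2) : ℝ) ^ ((1 - σ) * δ)
          ≤ ((Dc * z.1 ^ 2 + z.2 ^ 2) / (z.2 ^ 2) ^ σ) ^ δ := by
        rw [Real.rpow_mul hu0.le]
        exact Real.rpow_le_rpow (Real.rpow_nonneg hu0.le _) hg1 hδ₁.le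
      have c3 : (‖z‖ : ℝ) ^ e = (‖z‖ ^ 2 : ℝ) ^ ((1 - σ) * δ) := by
        rw [← Real.rpow_natCast ‖z‖ 2, ← Real.rpow_mul (norm_nonneg z), hedef]
        norm_num
      have h9 : (‖z‖ : ℝ) ^ e ≤ ((Dc * z.1 ^ 2 + z.2 ^ 2) / (z.2 ^ 2) ^ σ) ^ δ := by
        rw [c3]; exact le_trans c1 c2
      exact mul_le_mul_of_nonneg_left h9 hC₃.le
    have hNe : N < ‖z‖ ^ e := by
      have h10 : (N ^ (1 / e)) ^ e < ‖z‖ ^ e := Real.rpow_lt_rpow hR0 hRz he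
      rwa [← Real.rpow_mul hN0, one_div, inv_mul_cancel₀ he.ne', Real.rpow_one] at h10
    have h5 : C₃ * N < C₃ * ‖z‖ ^ e := mul_lt_mul_of_pos_left hNe hC₃
    have h6 : M / C₃ + 1 ≤ N := le_max_right _ _
    have h11 : C₃ * (M / C₃ + 1) = M + C₃ := by field_simp
    have h7 : M < C₃ * N := by
      linarith [h11, mul_le_mul_of_nonneg_left h6 hC₃.le, hC₃]
    linarith [hstep, h5, h7]
  · -- Part III
    have hsa : α₁ < σ * α₂ := by
      have h := (div_lt_iff₀ hα₂0).mp hσ₁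
      linarith [h]
    obtain ⟨ε, hεdef⟩ : ∃ ε : ℝ, ε = Dc - (α₂ + 2 * |a₂|) * (1 - σ) := ⟨_, rfl⟩
    have hε : 0 < ε := by
      have h := lt_of_le_of_lt (le_max_right 1 ((α₂ + 2 * |a₂|) * (1 - σ))) hD
      rw [hεdef]; linarith
    obtain ⟨β, hβdef⟩ : ∃ β : ℝ, β = Dc * (σ * α₂ - α₁) := ⟨_, rfl⟩
    have hβ : 0 < β := by rw [hβdef]; exact mul_pos hDc0 (by linarith)
    obtain ⟨K, hKdef⟩ : ∃ K : ℝ, K = 3 * Dc * |κ₁| + 12 * |κ₂| := ⟨_, rfl⟩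
    have hK0 : 0 ≤ K := by rw [hKdef]; positivity
    obtain ⟨M₂, hM₂def⟩ : ∃ M₂ : ℝ, M₂ = Dc * (|a₁| + |a₂|) + K * Dc + ε * Dc / 4 := ⟨_, rfl⟩
    have hM₂0 : 0 < M₂ := by
      rw [hM₂def]
      have h1 : 0 ≤ Dc * (|a₁| + |a₂|) :=
        mul_nonneg hDc0.le (add_nonneg (abs_nonneg a₁) (abs_nonneg a₂))
      have h2 : 0 ≤ K * Dc := mul_nonneg hK0 hDc0.le
      have h3 : 0 < ε * Dc := mul_pos hε hDc0
      linarith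
    obtain ⟨M₃, hM₃def⟩ : ∃ M₃ : ℝ, M₃ = M₂ ^ 3 / β ^ 2 := ⟨_, rfl⟩
    have hM₃ : 0 ≤ M₃ := by
      rw [hM₃def]; exact le_of_lt (div_pos (pow_pos hM₂0 3) (by positivity))
    have hM₃2 : M₂ ^ 3 ≤ M₃ * β ^ 2 := by
      rw [hM₃def, div_mul_cancel₀ _ (by positivity : (β:ℝ) ^ 2 ≠ 0)]
    obtain ⟨R', hR'def⟩ : ∃ R' : ℝ, R' = (M₃ + K) ^ 2 / ε := ⟨_, rfl⟩
    have hR' : (M₃ + K) ^ 2 ≤ R' * ε := by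
      rw [hR'def, div_mul_cancel₀ _ hε.ne']
    have hR0 : 0 ≤ R' := by rw [hR'def]; exact div_nonneg (sq_nonneg _) hε.le
    refine ⟨δ * ε / 2, by positivity, 2 * C₃ * δ * R' + 1, ?_, ?_⟩
    · have : 0 ≤ 2 * C₃ * δ * R' := by positivity
      linarith
    intro z hz
    have hx : z.1 < -(1/2) := by have := hz.1; linarith
    have hay : 1 < |z.2| := hz.2
    have hy0 : z.2 ≠ 0 := by
      intro h; rw [h] at hay; simp at hay; linarith
    have hv1 : 1 < z.2 ^ 2 := by rw [← sq_abs]; nlinarith [hay]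
    have hu0 : (0:ℝ) < Dc * z.1 ^ 2 + z.2 ^ 2 := by positivity
    have hune : (Dc * z.1 ^ 2 + z.2 ^ 2 : ℝ) ≠ 0 := hu0.ne'
    have hy2 : (0:ℝ) < z.2 ^ 2 := by positivity
    have hy2ne : (z.2 ^ 2 : ℝ) ≠ 0 := hy2.ne'
    have hu1 : (1:ℝ) ≤ Dc * z.1 ^ 2 + z.2 ^ 2 := by
      have h0 : (0:ℝ) ≤ Dc * z.1 ^ 2 := by positivity
      linarith
    have hfx : (fun t => phi3 C₃ Dc σ δ (t, z.2)) = fun t => St4.F C₃ Dc σ δ t z.2 :=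
      funext fun t => St4.phi3_eq_F hDc0.le hy0 t
    have hfy : (fun t => phi3 C₃ Dc σ δ (z.1, t)) = fun t => St4.F C₃ Dc σ δ z.1 t :=
      funext fun t => St4.phi3_eq_F_all hDc0.le hσ₀ hδ₁ z.1 t
    have hφ : phi3 C₃ Dc σ δ z
        = C₃ * (Dc * z.1 ^ 2 + z.2 ^ 2) ^ δ * (z.2 ^ 2) ^ (-(σ * δ)) :=
      St4.phi3_eq_F_all hDc0.le hσ₀ hδ₁ z.1 z.2
    have Eu1 : (Dc * z.1 ^ 2 + z.2 ^ 2) ^ (δ - 1)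
        = (Dc * z.1 ^ 2 + z.2 ^ 2) ^ (δ - 2) * (Dc * z.1 ^ 2 + z.2 ^ 2) := by
      have h := St4.rpow_shift1 hune (δ - 1)
      rwa [show δ - 1 - 1 = δ - 2 by ring] at h
    have Euδ : (Dc * z.1 ^ 2 + z.2 ^ 2) ^ δ
        = (Dc * z.1 ^ 2 + z.2 ^ 2) ^ (δ - 2)
          * ((Dc * z.1 ^ 2 + z.2 ^ 2) * (Dc * z.1 ^ 2 + z.2 ^ 2)) := by
      rw [St4.rpow_shift1 hune δ, Eu1]; ring
    have Ev1 : (z.2 ^ 2) ^ (-(σ * δ) - 1) = (z.2 ^ 2) ^ (-(σ * δ) - 2) * z.2 ^ 2 := by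
      have h := St4.rpow_shift1 hy2ne (-(σ * δ) - 1)
      rwa [show -(σ * δ) - 1 - 1 = -(σ * δ) - 2 by ring] at h
    have Ev0 : (z.2 ^ 2) ^ (-(σ * δ)) = (z.2 ^ 2) ^ (-(σ * δ) - 2) * z.2 ^ 2 * z.2 ^ 2 := by
      rw [St4.rpow_shift1 hy2ne (-(σ * δ)), Ev1]
    have hr1 : 0 < (Dc * z.1 ^ 2 + z.2 ^ 2) ^ (δ - 2) := Real.rpow_pos_of_pos hu0 _
    have hr2 : 0 < (z.2 ^ 2) ^ (-(σ * δ) - 2) := Real.rpow_pos_of_pos hy2 _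
    have hr1u : (Dc * z.1 ^ 2 + z.2 ^ 2) ^ (δ - 2) * (Dc * z.1 ^ 2 + z.2 ^ 2) ≤ 1 := by
      rw [← Eu1]
      exact Real.rpow_le_one_of_one_le_of_nonpos hu1 (by linarith)
    have hr2v : (z.2 ^ 2) ^ (-(σ * δ) - 2) * z.2 ^ 2 ≤ 1 := by
      rw [← Ev1]
      exact Real.rpow_le_one_of_one_le_of_nonpos hv1.le
        (by nlinarith [mul_pos hσ₀ hδ₁])
    simp only [Lop]
    rw [hfx, hfy, (St4.hasDerivAt_F_x hDc0 hy0 z.1).deriv, St4.deriv2_F_x hDc0 hy0 z.1,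
      (St4.hasDerivAt_F_y hDc0 hy0 z.1).deriv, St4.deriv2_F_y hDc0 hy0 z.1]
    simp only [St4.Gv]
    rw [hφ, Euδ, Eu1, Ev0, Ev1]
    exact St4.key hσ₀ hσ₂ hδ₁ hδ₂ hC₃ hDc1 hx hv1 rfl rfl hr1 hr2 hr1u hr2v
      hε (le_of_eq hεdef) hβ (le_of_eq hβdef) hKdef.ge hM₂def.ge
      hM₃ hM₃2 hR'
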